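/- Let Ī₁, Ī₂, Ī₃, J₃, m, g, h̄ be positive real constants and χ ∈ ℝ³, set Ω(Π,l) = (Π₁/Ī₁, Π₂/Ī₂, (Π₃−l)/Ī₃) and h(Π,Γ,α,l) = (1/2)[Π₁²/Ī₁ + Π₂²/Ī₂ + (Π₃−l)²/Ī₃ + l²/J₃] + m g h̄ ⟨Γ,χ⟩. Suppose Π, Γ : ℝ → ℝ³ and α, l : ℝ → ℝ are differentiable and for all t satisfy Π'(t) = Π(t) × Ω(Π(t),l(t)) + m g h̄ (Γ(t) × χ), Γ'(t) = Γ(t) × Ω(Π(t),l(t)), α'(t) = −(Π₃(t)−l(t))/Ī₃ + l(t)/J₃, and l'(t) = 0. Then the function t ↦ h(Π(t),Γ(t),α(t),l(t)) is constant. -/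

import Mathlib

/-- Cross product on `ℝ³`. -/
def cross3 (a b : Fin 3 → ℝ) : Fin 3 → ℝ :=
  ![a 1 * b 2 - a 2 * b 1, a 2 * b 0 - a 0 * b 2, a 0 * b 1 - a 1 * b 0]

/-- Euclidean inner product on `ℝ³`. -/
def dot3 (a b : Fin 3 → ℝ) : ℝ := a 0 * b 0 + a 1 * b 1 + a 2 * b 2

/-- Conservation of energy for the reduced spacecraft-rotor system with non-coincident
centers of buoyancy and gravity and zero control torque: along solutions of
`Π' = Π × Ω + mgh̄(Γ × χ)`, `Γ' = Γ × Ω`, `α' = −(Π₃−l)/Ī₃ + l/J₃`, `l' = 0`,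
the reduced Hamiltonian is constant. -/
theorem spacecraft_rotor_energy_conservation_noncoincident
    (I1 I2 I3 J3 m g hb : ℝ)
    (hI1 : 0 < I1) (hI2 : 0 < I2) (hI3 : 0 < I3) (hJ3 : 0 < J3)
    (hm : 0 < m) (hg : 0 < g) (hhb : 0 < hb) (χ : Fin 3 → ℝ)
    (Ω : (Fin 3 → ℝ) → ℝ → Fin 3 → ℝ)
    (hΩ : Ω = fun P l => ![P 0 / I1, P 1 / I2, (P 2 - l) / I3])
    (h : (Fin 3 → ℝ) → (Fin 3 → ℝ) → ℝ → ℝ → ℝ)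
    (hh : h = fun P G α l => (1/2) * ((P 0)^2 / I1 + (P 1)^2 / I2
      + (P 2 - l)^2 / I3 + l^2 / J3) + m * g * hb * dot3 G χ)
    (P G : ℝ → Fin 3 → ℝ) (α : ℝ → ℝ) (l : ℝ → ℝ)
    (hP : ∀ t, HasDerivAt P
      (fun i => cross3 (P t) (Ω (P t) (l t)) i + m * g * hb * cross3 (G t) χ i) t)
    (hG : ∀ t, HasDerivAt G (cross3 (G t) (Ω (P t) (l t))) t)
    (hα : ∀ t, HasDerivAt α (-(P t 2 - l t) / I3 + l t / J3) t)
    (hl : ∀ t, HasDerivAt l 0 t) :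
    ∀ t₁ t₂ : ℝ, h (P t₁) (G t₁) (α t₁) (l t₁) = h (P t₂) (G t₂) (α t₂) (l t₂) := by
  subst hΩ hh
  have key : ∀ t : ℝ, HasDerivAt (fun t => (1/2 : ℝ) * ((P t 0)^2 / I1 + (P t 1)^2 / I2
      + (P t 2 - l t)^2 / I3 + (l t)^2 / J3) + m * g * hb * dot3 (G t) χ) 0 t := by
    intro t
    have hp0 := hasDerivAt_pi.mp (hP t) 0
    have hp1 := hasDerivAt_pi.mp (hP t) 1
    have hp2 := hasDerivAt_pi.mp (hP t) 2
    have hg0 := hasDerivAt_pi.mp (hG t) 0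
    have hg1 := hasDerivAt_pi.mp (hG t) 1
    have hg2 := hasDerivAt_pi.mp (hG t) 2
    have hE := ((((((hp0.pow 2).div_const I1).add ((hp1.pow 2).div_const I2)).add
        (((hp2.sub (hl t)).pow 2).div_const I3)).add
        (((hl t).pow 2).div_const J3)).const_mul (1/2 : ℝ)).add
        ((((hg0.mul_const (χ 0)).add (hg1.mul_const (χ 1))).add
          (hg2.mul_const (χ 2))).const_mul (m * g * hb))
    have congr0 : ∀ {f : ℝ → ℝ} {d : ℝ}, HasDerivAt f d t → d = 0 → HasDerivAt f 0 t :=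
      fun hf e => e ▸ hf
    exact congr0 hE (by
      simp only [cross3, Matrix.cons_val_zero, Matrix.cons_val_one, Matrix.head_cons, Matrix.cons_val_two]
      norm_num
      field_simp
      ring)
  intro t₁ t₂
  have := is_const_of_deriv_eq_zero (f := fun t => (1/2 : ℝ) * ((P t 0)^2 / I1 + (P t 1)^2 / I2
      + (P t 2 - l t)^2 / I3 + (l t)^2 / J3) + m * g * hb * dot3 (G t) χ)
      (fun t => (key t).differentiableAt) (fun t => (key t).deriv) t₁ t₂
  simpa using this
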